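/- Let λ ≠ 0 and let κ : I → ℝ be positive and differentiable with λ∫_{s₀}^s κ < B. Writing E(s) = e^{λ∫_{s₀}^s κ - B}, the following antiderivative identity holds: d/ds [ arctan(√(1 - E(s)²)/λ) - (1/λ) arctanh(√(1 - E(s)²)) ] = (1+λ²) κ(s) √(1 - E(s)²) / (1 + λ² - E(s)²). -/

import Mathlib

/-- Inverse hyperbolic tangent. -/
noncomputable def artanh (x : ℝ) : ℝ := Real.log ((1 + x) / (1 - x)) / 2

lemma artanh_hasDerivAt {x : ℝ} (h1 : -1 < x) (h2 : x < 1) :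
    HasDerivAt artanh (1 / (1 - x ^ 2)) x := by
  have h1' : 0 < 1 + x := by linarith
  have h2' : 0 < 1 - x := by linarith
  have hnum : HasDerivAt (fun t : ℝ => 1 + t) 1 x := (hasDerivAt_id x).const_add 1
  have hden : HasDerivAt (fun t : ℝ => 1 - t) (-1) x := by
    simpa using (hasDerivAt_id x).const_sub 1
  have hquot := hnum.div hden h2'.ne'
  have hpos : (0:ℝ) < (1 + x) / (1 - x) := div_pos h1' h2'
  have hlog := (hquot.log hpos.ne').div_const 2
  have hx2 : 1 - x ^ 2 ≠ 0 := by nlinarith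
  have heq : artanh = fun t : ℝ => Real.log ((1 + t) / (1 - t)) / 2 := rfl
  rw [heq]
  refine hlog.congr_deriv (Eq.symm ?_)
  simp only [Pi.div_apply]
  field_simp
  ring

/-- with `E(s) = exp(λ∫_{s₀}^s κ − B)`,
`d/ds [arctan(√(1-E²)/λ) − (1/λ)artanh(√(1-E²))] = (1+λ²)κ√(1-E²)/(1+λ²-E²)`. -/
theorem theta_antiderivative
    (I : Set ℝ) (s₀ : ℝ) (hs₀ : s₀ ∈ I) (hI : IsOpen I) (hconn : Convex ℝ I)
    (κ : ℝ → ℝ) (lam B : ℝ) (hlam : lam ≠ 0)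
    (hκc : ContinuousOn κ I) (hκd : ∀ s ∈ I, DifferentiableAt ℝ κ s)
    (hκ : ∀ s ∈ I, 0 < κ s)
    (hB : ∀ s ∈ I, lam * ∫ u in s₀..s, κ u < B)
    (E : ℝ → ℝ)
    (hE : ∀ s, E s = Real.exp (lam * (∫ u in s₀..s, κ u) - B)) :
    ∀ s ∈ I, HasDerivAt
      (fun u => Real.arctan (Real.sqrt (1 - E u ^ 2) / lam) -
        artanh (Real.sqrt (1 - E u ^ 2)) / lam)
      ((1 + lam ^ 2) * κ s * Real.sqrt (1 - E s ^ 2) / (1 + lam ^ 2 - E s ^ 2)) s := by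
  intro s hs
  have hord : Set.OrdConnected I := hconn.ordConnected
  have hIcc : Set.uIcc s₀ s ⊆ I := Set.OrdConnected.uIcc_subset hord hs₀ hs
  -- derivative of the integral
  have hint : IntervalIntegrable κ MeasureTheory.volume s₀ s :=
    (hκc.mono hIcc).intervalIntegrable
  have hderInt : HasDerivAt (fun u => ∫ t in s₀..u, κ t) (κ s) s :=
    intervalIntegral.integral_hasDerivAt_right hint
      (hκc.stronglyMeasurableAtFilter hI s hs) ((hκd s hs).continuousAt)
  have hF : HasDerivAt (fun u => lam * (∫ t in s₀..u, κ t) - B) (lam * κ s) s := by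
    simpa using (hderInt.const_mul lam).sub_const B
  have hEfun : E = fun u => Real.exp (lam * (∫ t in s₀..u, κ t) - B) := funext hE
  have hE' : HasDerivAt E (E s * (lam * κ s)) s := by
    rw [hEfun]
    simpa using hF.exp
  -- bounds on E s
  have hEpos : 0 < E s := by rw [hE]; exact Real.exp_pos _
  have hElt : E s < 1 := by
    rw [hE]
    have := hB s hs
    calc Real.exp (lam * (∫ u in s₀..s, κ u) - B) < Real.exp 0 :=
          Real.exp_lt_exp.2 (by linarith)
      _ = 1 := Real.exp_zero
  have hQpos : 0 < 1 - E s ^ 2 := by nlinarith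
  -- derivative of Q = 1 - E^2
  have hQ : HasDerivAt (fun u => 1 - E u ^ 2)
      (-(2 * E s ^ 1 * (E s * (lam * κ s)))) s := by
    simpa using ((hE'.pow 2).const_sub 1)
  have hg : HasDerivAt (fun u => Real.sqrt (1 - E u ^ 2))
      (-(2 * E s ^ 1 * (E s * (lam * κ s))) / (2 * Real.sqrt (1 - E s ^ 2))) s :=
    hQ.sqrt hQpos.ne'
  set q : ℝ := Real.sqrt (1 - E s ^ 2) with hqdef
  have hqpos : 0 < q := Real.sqrt_pos.2 hQpos
  have hq2 : q ^ 2 = 1 - E s ^ 2 := Real.sq_sqrt hQpos.le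
  have hqlt : q < 1 := by nlinarith
  -- arctan part
  have h1 : HasDerivAt (fun u => Real.arctan (Real.sqrt (1 - E u ^ 2) / lam))
      (1 / (1 + (q / lam) ^ 2) *
        (-(2 * E s ^ 1 * (E s * (lam * κ s))) / (2 * q) / lam)) s :=
    by have := (Real.hasDerivAt_arctan (q / lam)).comp s (hg.div_const lam); exact this
  -- artanh part
  have h2 : HasDerivAt (fun u => artanh (Real.sqrt (1 - E u ^ 2)) / lam)
      ((1 / (1 - q ^ 2) *
        (-(2 * E s ^ 1 * (E s * (lam * κ s))) / (2 * q))) / lam) s :=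
    by have := ((artanh_hasDerivAt (by linarith) hqlt).comp s hg).div_const lam; exact this
  have hsum := h1.sub h2
  refine hsum.congr_deriv (Eq.symm ?_)
  have hE2 : E s ^ 2 = 1 - q ^ 2 := by linarith
  have hE2ne : 1 - q ^ 2 ≠ 0 := by rw [← hE2]; positivity
  have hden1 : 1 + (q / lam) ^ 2 ≠ 0 := by positivity
  have hden2 : 1 + lam ^ 2 - E s ^ 2 ≠ 0 := by
    rw [hE2]; have : 0 < lam ^ 2 := by positivity
    nlinarith
  rw [hE2]
  have hlq : lam ^ 2 + q ^ 2 ≠ 0 := by positivity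
  field_simp
  ring_nf
  rw [hE2]
  field_simp
  ring
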